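/- Let N ≥ 2 and ℓ ∈ (0,∞)^N, and define Ψ_τ = −∑_{j=1}^N cot(τℓ_j) for τ > 0 with τℓ_j ∉ πℤ for all j. Then in each connected component I of (0,∞) \ ∪_j (πℤ/ℓ_j), the function τ ↦ Ψ_τ is strictly increasing, tends to −∞ at the left endpoint of I and to +∞ at the right endpoint, and hence has exactly one zero in I. -/

import Mathlib

open Real Finset Filter Topology

lemma cot_periodic : Function.Periodic Real.cot Real.pi := fun x => by
  simp [Real.cot_eq_cos_div_sin, Real.cos_add_pi, Real.sin_add_pi, neg_div_neg_eq]

lemma tendsto_cot_zero_right : Tendsto Real.cot (𝓝[>] (0:ℝ)) atTop := by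
  have hsin : Tendsto Real.sin (𝓝[>] (0:ℝ)) (𝓝[>] 0) := by
    rw [tendsto_nhdsWithin_iff]
    constructor
    · simpa using (Real.continuous_sin.continuousAt (x := 0)).tendsto.mono_left
        nhdsWithin_le_nhds
    · filter_upwards [Ioo_mem_nhdsGT_of_mem (Set.mem_Ico.mpr ⟨le_refl 0, Real.pi_pos⟩)]
        with x hx
      exact Real.sin_pos_of_pos_of_lt_pi hx.1 hx.2
  have hinv : Tendsto (fun x => (Real.sin x)⁻¹) (𝓝[>] (0:ℝ)) atTop :=
    tendsto_inv_nhdsGT_zero.comp hsin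
  have hcos : Tendsto Real.cos (𝓝[>] (0:ℝ)) (𝓝 1) := by
    simpa using (Real.continuous_cos.continuousAt (x := 0)).tendsto.mono_left
      nhdsWithin_le_nhds
  have := hcos.pos_mul_atTop one_pos hinv
  refine this.congr fun x => ?_
  rw [Real.cot_eq_cos_div_sin, div_eq_mul_inv]

lemma tendsto_cot_zero_left : Tendsto Real.cot (𝓝[<] (0:ℝ)) atBot := by
  have hneg : Tendsto (fun x : ℝ => -x) (𝓝[<] (0:ℝ)) (𝓝[>] (0:ℝ)) := by
    rw [tendsto_nhdsWithin_iff]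
    refine ⟨by simpa using (continuous_neg.tendsto (0:ℝ)).mono_left nhdsWithin_le_nhds, ?_⟩
    filter_upwards [self_mem_nhdsWithin] with x hx
    simpa using hx
  have : Tendsto (fun x : ℝ => -Real.cot (-x)) (𝓝[<] (0:ℝ)) atBot :=
    (tendsto_neg_atTop_atBot).comp (tendsto_cot_zero_right.comp hneg)
  refine this.congr fun x => ?_
  rw [Real.cot_eq_cos_div_sin, Real.cot_eq_cos_div_sin, Real.cos_neg, Real.sin_neg,
    div_neg, neg_neg]

lemma tendsto_cot_int_right (m : ℤ) :
    Tendsto Real.cot (𝓝[>] ((m:ℝ) * Real.pi)) atTop := by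
  have hsub : Tendsto (fun x : ℝ => x - m * Real.pi) (𝓝[>] ((m:ℝ) * Real.pi)) (𝓝[>] (0:ℝ)) := by
    rw [tendsto_nhdsWithin_iff]
    have h1 : Tendsto (fun x : ℝ => x - m * Real.pi) (𝓝 ((m:ℝ) * Real.pi)) (𝓝 0) := by
      have := ((continuous_id.sub continuous_const).tendsto ((m:ℝ) * Real.pi) :
        Tendsto (fun x : ℝ => x - m * Real.pi) _ _)
      rw [show (0:ℝ) = (m:ℝ) * Real.pi - m * Real.pi by ring]; exact this
    refine ⟨h1.mono_left nhdsWithin_le_nhds, ?_⟩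
    filter_upwards [self_mem_nhdsWithin] with x hx
    simpa [sub_pos] using hx
  have := tendsto_cot_zero_right.comp hsub
  refine this.congr fun x => ?_
  exact cot_periodic.sub_int_mul_eq m

lemma tendsto_cot_int_left (m : ℤ) :
    Tendsto Real.cot (𝓝[<] ((m:ℝ) * Real.pi)) atBot := by
  have hsub : Tendsto (fun x : ℝ => x - m * Real.pi) (𝓝[<] ((m:ℝ) * Real.pi)) (𝓝[<] (0:ℝ)) := by
    rw [tendsto_nhdsWithin_iff]
    have h1 : Tendsto (fun x : ℝ => x - m * Real.pi) (𝓝 ((m:ℝ) * Real.pi)) (𝓝 0) := by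
      have := ((continuous_id.sub continuous_const).tendsto ((m:ℝ) * Real.pi) :
        Tendsto (fun x : ℝ => x - m * Real.pi) _ _)
      rw [show (0:ℝ) = (m:ℝ) * Real.pi - m * Real.pi by ring]; exact this
    refine ⟨h1.mono_left nhdsWithin_le_nhds, ?_⟩
    filter_upwards [self_mem_nhdsWithin] with x hx
    simpa [sub_neg] using hx
  have := tendsto_cot_zero_left.comp hsub
  refine this.congr fun x => ?_
  exact cot_periodic.sub_int_mul_eq m

lemma tendsto_sum_atTop {N : ℕ} (g : Fin N → ℝ → ℝ) (l : Filter ℝ)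
    (h : ∀ i, Tendsto (g i) l atTop ∨ ∃ c, Tendsto (g i) l (𝓝 c))
    (j : Fin N) (hjt : Tendsto (g j) l atTop) :
    Tendsto (fun τ => ∑ i, g i τ) l atTop := by
  have hb : ∀ i : Fin N, ∃ c : ℝ, ∀ᶠ τ in l, c ≤ g i τ := by
    intro i
    rcases h i with hi | ⟨c, hc⟩
    · exact ⟨0, hi.eventually (eventually_ge_atTop 0)⟩
    · exact ⟨c - 1, hc.eventually_const_le (show c - 1 < c by linarith)⟩
  choose c hc using hb
  have hrest : ∀ᶠ τ in l,
      ∑ i ∈ Finset.univ.erase j, c i ≤ ∑ i ∈ Finset.univ.erase j, g i τ := by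
    filter_upwards [(eventually_all_finset (Finset.univ.erase j)).2 fun i _ => hc i] with τ hτ
    exact Finset.sum_le_sum fun i hi => hτ i hi
  refine tendsto_atTop_mono' l ?_
    (tendsto_atTop_add_const_left l (∑ i ∈ Finset.univ.erase j, c i) hjt)
  filter_upwards [hrest] with τ hτ
  have he : ∑ i, g i τ = g j τ + ∑ i ∈ Finset.univ.erase j, g i τ :=
    (Finset.add_sum_erase _ _ (Finset.mem_univ j)).symm
  rw [he]; linarith

/-- On each connected component `(a,b)` of `(0,∞) \ ⋃_j πℤ/ℓ_j`, the function
`Ψ_τ = −∑ cot(τ ℓ_j)` is strictly increasing, tends to `−∞` at `a⁺` and `+∞` at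
`b⁻`, and has exactly one zero. -/
theorem Psi_on_component (N : ℕ) (hN : 2 ≤ N) (ℓ : Fin N → ℝ) (hℓ : ∀ j, 0 < ℓ j)
    (a b : ℝ) (hab : a < b) (ha : 0 ≤ a)
    (haT : a = 0 ∨ ∃ j : Fin N, ∃ m : ℤ, a * ℓ j = m * Real.pi)
    (hbT : ∃ j : Fin N, ∃ m : ℤ, b * ℓ j = m * Real.pi)
    (hI : ∀ τ ∈ Set.Ioo a b, ∀ j : Fin N, Real.sin (τ * ℓ j) ≠ 0) :
    StrictMonoOn (fun τ : ℝ => -∑ j : Fin N, Real.cot (τ * ℓ j)) (Set.Ioo a b) ∧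
    Tendsto (fun τ : ℝ => -∑ j : Fin N, Real.cot (τ * ℓ j)) (𝓝[>] a) atBot ∧
    Tendsto (fun τ : ℝ => -∑ j : Fin N, Real.cot (τ * ℓ j)) (𝓝[<] b) atTop ∧
    ∃! τ : ℝ, τ ∈ Set.Ioo a b ∧ -∑ j : Fin N, Real.cot (τ * ℓ j) = 0 := by
  have hNE : Nonempty (Fin N) := ⟨⟨0, by omega⟩⟩
  set f : ℝ → ℝ := fun τ => -∑ j : Fin N, Real.cot (τ * ℓ j) with hf
  -- derivative
  have key : ∀ x ∈ Set.Ioo a b,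
      HasDerivAt f (∑ j : Fin N, ℓ j / Real.sin (x * ℓ j) ^ 2) x := by
    intro x hx
    have h : HasDerivAt (fun τ : ℝ => ∑ j : Fin N, Real.cot (τ * ℓ j))
        (∑ j : Fin N, -(ℓ j / Real.sin (x * ℓ j) ^ 2)) x := by
      apply HasDerivAt.fun_sum
      intro j _
      have hne := hI x hx j
      have h1 : HasDerivAt (fun τ : ℝ => τ * ℓ j) (1 * ℓ j) x :=
        (hasDerivAt_id x).mul_const (ℓ j)
      have hcos := (Real.hasDerivAt_cos (x * ℓ j)).comp x h1
      have hsin := (Real.hasDerivAt_sin (x * ℓ j)).comp x h1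
      have hdiv := hcos.fun_div hsin hne
      have heq : (-Real.sin (x * ℓ j) * (1 * ℓ j) * Real.sin (x * ℓ j) -
          Real.cos (x * ℓ j) * (Real.cos (x * ℓ j) * (1 * ℓ j))) / Real.sin (x * ℓ j) ^ 2
          = -(ℓ j / Real.sin (x * ℓ j) ^ 2) := by
        have hsc := Real.sin_sq_add_cos_sq (x * ℓ j)
        field_simp
        linear_combination (-(ℓ j)) * hsc
      rw [← heq]
      simpa [Real.cot_eq_cos_div_sin] using hdiv
    simpa using h.fun_neg
  have hpos : ∀ x ∈ Set.Ioo a b, 0 < ∑ j : Fin N, ℓ j / Real.sin (x * ℓ j) ^ 2 := by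
    intro x hx
    refine Finset.sum_pos (fun j _ => div_pos (hℓ j)
      (pow_two_pos_of_ne_zero (hI x hx j))) Finset.univ_nonempty
  have hcont : ContinuousOn f (Set.Ioo a b) := fun x hx =>
    (key x hx).continuousAt.continuousWithinAt
  have hmono : StrictMonoOn f (Set.Ioo a b) := by
    refine strictMonoOn_of_deriv_pos (convex_Ioo a b) hcont fun x hx => ?_
    rw [interior_Ioo] at hx
    rw [(key x hx).deriv]
    exact hpos x hx
  -- limits of τ ↦ τ * ℓ i
  have hmulb : ∀ i : Fin N, Tendsto (fun τ : ℝ => τ * ℓ i) (𝓝[<] b) (𝓝[<] (b * ℓ i)) := by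
    intro i
    rw [tendsto_nhdsWithin_iff]
    refine ⟨((continuous_id.mul continuous_const).tendsto b).mono_left nhdsWithin_le_nhds, ?_⟩
    filter_upwards [self_mem_nhdsWithin] with τ hτ
    exact mul_lt_mul_of_pos_right hτ (hℓ i)
  have hmula : ∀ i : Fin N, Tendsto (fun τ : ℝ => τ * ℓ i) (𝓝[>] a) (𝓝[>] (a * ℓ i)) := by
    intro i
    rw [tendsto_nhdsWithin_iff]
    refine ⟨((continuous_id.mul continuous_const).tendsto a).mono_left nhdsWithin_le_nhds, ?_⟩
    filter_upwards [self_mem_nhdsWithin] with τ hτ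
    exact mul_lt_mul_of_pos_right hτ (hℓ i)
  -- behavior at b
  have htop : Tendsto f (𝓝[<] b) atTop := by
    have hsum : Tendsto (fun τ : ℝ => ∑ i : Fin N, -Real.cot (τ * ℓ i)) (𝓝[<] b) atTop := by
      obtain ⟨j, m, hm⟩ := hbT
      have hcase : ∀ i : Fin N, (∃ m : ℤ, b * ℓ i = m * Real.pi) →
          Tendsto (fun τ : ℝ => -Real.cot (τ * ℓ i)) (𝓝[<] b) atTop := by
        rintro i ⟨m', hm'⟩
        have := (tendsto_cot_int_left m').comp (hm' ▸ hmulb i)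
        exact tendsto_neg_atBot_atTop.comp this
      refine tendsto_sum_atTop _ _ ?_ j (hcase j ⟨m, hm⟩)
      intro i
      by_cases hi : ∃ m : ℤ, b * ℓ i = m * Real.pi
      · exact Or.inl (hcase i hi)
      · refine Or.inr ⟨-Real.cot (b * ℓ i), ?_⟩
        have hne : Real.sin (b * ℓ i) ≠ 0 := by
          intro h
          obtain ⟨n, hn⟩ := Real.sin_eq_zero_iff.1 h
          exact hi ⟨n, hn.symm⟩
        have hca : ContinuousAt Real.cot (b * ℓ i) := by
          have : ContinuousAt (fun x => Real.cos x / Real.sin x) (b * ℓ i) :=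
            (Real.continuous_cos.continuousAt).div (Real.continuous_sin.continuousAt) hne
          exact this.congr (by
            filter_upwards with x
            rw [Real.cot_eq_cos_div_sin])
        exact (hca.tendsto.comp ((hmulb i).mono_right nhdsWithin_le_nhds)).neg
    refine hsum.congr fun τ => ?_
    simp [hf]
  -- behavior at a
  have hbot : Tendsto f (𝓝[>] a) atBot := by
    have haT' : ∃ j : Fin N, ∃ m : ℤ, a * ℓ j = m * Real.pi := by
      rcases haT with h0 | h
      · exact ⟨⟨0, by omega⟩, 0, by simp [h0]⟩
      · exact h
    obtain ⟨j, m, hm⟩ := haT'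
    have hcase : ∀ i : Fin N, (∃ m : ℤ, a * ℓ i = m * Real.pi) →
        Tendsto (fun τ : ℝ => Real.cot (τ * ℓ i)) (𝓝[>] a) atTop := by
      rintro i ⟨m', hm'⟩
      exact (tendsto_cot_int_right m').comp (hm' ▸ hmula i)
    have hsum : Tendsto (fun τ : ℝ => ∑ i : Fin N, Real.cot (τ * ℓ i)) (𝓝[>] a) atTop := by
      refine tendsto_sum_atTop _ _ ?_ j (hcase j ⟨m, hm⟩)
      intro i
      by_cases hi : ∃ m : ℤ, a * ℓ i = m * Real.pi
      · exact Or.inl (hcase i hi)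
      · refine Or.inr ⟨Real.cot (a * ℓ i), ?_⟩
        have hne : Real.sin (a * ℓ i) ≠ 0 := by
          intro h
          obtain ⟨n, hn⟩ := Real.sin_eq_zero_iff.1 h
          exact hi ⟨n, hn.symm⟩
        have hca : ContinuousAt Real.cot (a * ℓ i) := by
          have : ContinuousAt (fun x => Real.cos x / Real.sin x) (a * ℓ i) :=
            (Real.continuous_cos.continuousAt).div (Real.continuous_sin.continuousAt) hne
          exact this.congr (by
            filter_upwards with x
            rw [Real.cot_eq_cos_div_sin])
        exact hca.tendsto.comp ((hmula i).mono_right nhdsWithin_le_nhds)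
    exact tendsto_neg_atTop_atBot.comp hsum
  refine ⟨hmono, hbot, htop, ?_⟩
  -- existence and uniqueness of the zero
  obtain ⟨τ₁, hτ₁neg, hτ₁mem⟩ :=
    ((hbot.eventually (eventually_lt_atBot 0)).and
      (Ioo_mem_nhdsGT_of_mem ⟨le_refl a, hab⟩ : ∀ᶠ τ in 𝓝[>] a, τ ∈ Set.Ioo a b)).exists
  obtain ⟨τ₂, hτ₂pos, hτ₂mem⟩ :=
    ((htop.eventually (eventually_gt_atTop 0)).and
      (Ioo_mem_nhdsLT_of_mem ⟨hab, le_refl b⟩ : ∀ᶠ τ in 𝓝[<] b, τ ∈ Set.Ioo a b)).exists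
  have hlt : τ₁ < τ₂ := by
    rcases lt_trichotomy τ₁ τ₂ with h | h | h
    · exact h
    · exfalso; rw [h] at hτ₁neg; linarith
    · exfalso; have := hmono hτ₂mem hτ₁mem h; linarith
  have hsub : Set.Icc τ₁ τ₂ ⊆ Set.Ioo a b := Set.Icc_subset_Ioo hτ₁mem.1 hτ₂mem.2
  have h0mem : (0 : ℝ) ∈ Set.Ioo (f τ₁) (f τ₂) := ⟨hτ₁neg, hτ₂pos⟩
  obtain ⟨τ, hτmem, hfτ⟩ := intermediate_value_Ioo hlt.le (hcont.mono hsub) h0mem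
  have hτab : τ ∈ Set.Ioo a b := hsub (Set.Ioo_subset_Icc_self hτmem)
  refine ⟨τ, ⟨hτab, hfτ⟩, ?_⟩
  rintro τ' ⟨hτ'ab, hfτ'⟩
  exact hmono.injOn hτ'ab hτab ((show f τ' = 0 from hfτ').trans hfτ.symm)
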